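/- Let A, k, f > 0 and ω ∈ ℝ. If (X, Y) : ℝ → ℝ² is a differentiable solution of the system Ẋ = A·k·cos X·cosh Y − ω·Y − f, Ẏ = A·k·sin X·sinh Y, then the function t ↦ H(X(t), Y(t)), where H(X,Y) = A·k·cos X·sinh Y − (ω/2)·Y² − f·Y, is constant. -/

import Mathlib

/-- `H(X,Y) = Ak·cos X·sinh Y − ½ωY² − fY` is a conserved quantity
(Hamiltonian) for the system `Ẋ = Ak·cos X·cosh Y − ωY − f`,
`Ẏ = Ak·sin X·sinh Y`. -/
theorem hamiltonian_conserved (A k f ω : ℝ) (hA : 0 < A) (hk : 0 < k) (hf : 0 < f)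
    (X Y : ℝ → ℝ) (hX : Differentiable ℝ X) (hY : Differentiable ℝ Y)
    (hX' : ∀ t, deriv X t = A * k * Real.cos (X t) * Real.cosh (Y t) - ω * Y t - f)
    (hY' : ∀ t, deriv Y t = A * k * Real.sin (X t) * Real.sinh (Y t)) :
    ∀ t₁ t₂ : ℝ,
      A * k * Real.cos (X t₁) * Real.sinh (Y t₁) - ω / 2 * (Y t₁) ^ 2 - f * Y t₁ =
      A * k * Real.cos (X t₂) * Real.sinh (Y t₂) - ω / 2 * (Y t₂) ^ 2 - f * Y t₂ := by
  have key : ∀ t, HasDerivAt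
      (fun t => A * k * Real.cos (X t) * Real.sinh (Y t) - ω / 2 * (Y t) ^ 2 - f * Y t)
      0 t := by
    intro t
    have hXt := (hX t).hasDerivAt
    have hYt := (hY t).hasDerivAt
    have hcos : HasDerivAt (fun t => Real.cos (X t))
        (-Real.sin (X t) * deriv X t) t := (Real.hasDerivAt_cos (X t)).comp t hXt
    have hsinh : HasDerivAt (fun t => Real.sinh (Y t))
        (Real.cosh (Y t) * deriv Y t) t := (Real.hasDerivAt_sinh (Y t)).comp t hYt
    have h1 : HasDerivAt (fun t => A * k * Real.cos (X t) * Real.sinh (Y t))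
        (A * k * ((-Real.sin (X t) * deriv X t) * Real.sinh (Y t)
          + Real.cos (X t) * (Real.cosh (Y t) * deriv Y t))) t := by
      have := ((hcos.const_mul (A * k)).mul hsinh)
      refine this.congr_deriv ?_
      ring
    have h2 : HasDerivAt (fun t => ω / 2 * (Y t) ^ 2)
        (ω / 2 * (2 * Y t * deriv Y t)) t := by
      have := (hYt.pow 2).const_mul (ω / 2)
      refine this.congr_deriv ?_
      ring
    have h3 : HasDerivAt (fun t => f * Y t) (f * deriv Y t) t := hYt.const_mul f
    have := (h1.sub h2).sub h3
    refine this.congr_deriv ?_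
    rw [hX' t, hY' t]
    ring
  intro t₁ t₂
  have hconst : ∀ t, (fun t => A * k * Real.cos (X t) * Real.sinh (Y t)
      - ω / 2 * (Y t) ^ 2 - f * Y t) t
      = (fun t => A * k * Real.cos (X t) * Real.sinh (Y t)
      - ω / 2 * (Y t) ^ 2 - f * Y t) 0 := by
    intro t
    exact is_const_of_deriv_eq_zero (fun s => (key s).differentiableAt)
      (fun s => (key s).deriv) t 0
  simpa using (hconst t₁).trans (hconst t₂).symm
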